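/- arXiv:2010.10157 — 2 statements merged into one kernel-verified Lean document; each statement's English description precedes it below -/
import Mathlib

section
/- For every real number ρ, one has (ρ²/12)·φ(ρ) + Φ₁(ρ)² = Φ₁(2ρ), where φ(ρ) = 4Φ₂(ρ)Φ₁(2ρ) − 3Φ₁(ρ)⁴. -/
noncomputable def Phi1 (ρ : ℝ) : ℝ :=
  if ρ = 0 then 1 else (1 - Real.exp (-ρ)) / ρ

noncomputable def Phi2 (ρ : ℝ) : ℝ :=
  if ρ = 0 then 1
  else (3 / (2 * ρ ^ 3)) * (2 * ρ - 3 + 4 * Real.exp (-ρ) - Real.exp (-2 * ρ))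

noncomputable def phi (ρ : ℝ) : ℝ :=
  4 * Phi2 ρ * Phi1 (2 * ρ) - 3 * (Phi1 ρ) ^ 4

theorem stmt_1 (ρ : ℝ) : (ρ ^ 2 / 12) * phi ρ + (Phi1 ρ) ^ 2 = Phi1 (2 * ρ) := by
  unfold phi Phi1 Phi2
  rcases eq_or_ne ρ 0 with h | h
  · simp [h]
  · have h2 : (2 : ℝ) * ρ ≠ 0 := mul_ne_zero two_ne_zero h
    have hE : Real.exp (-(2 * ρ)) = Real.exp (-ρ) ^ 2 := by
      rw [← Real.exp_nat_mul]; ring_nf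
    simp only [if_neg h, if_neg h2, neg_mul, hE] at *
    field_simp
    ring
end

section
/- Let t > 0, γ ∈ ℝ, σ > 0 and δq, δp ∈ ℝ^d. Then, with c_qq = (σ²t³/3)Φ₂(γt), c_qp = (σ²t²/2)Φ₁(γt)², c_pp = σ²t·Φ₁(2γt), and D = (σ⁴t⁴/12)φ(γt), one has (1/D)·(c_pp|δq|² − 2c_qp (δq · δp) + c_qq|δp|²) = (1/(σ²t))·|γδq + δp|² + (12/(σ²t³φ(γt)))·|Φ₁(γt)δq − (t/2)Φ₃(γt)δp|². -/
open Real

-- f(x) = x + (x+2) e^{-x} is strictly increasing on [0,∞)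
lemma fpos {x : ℝ} (hx : 0 < x) : 2 < x + (x + 2) * Real.exp (-x) := by
  have h : StrictMonoOn (fun y : ℝ => y + (y + 2) * Real.exp (-y)) (Set.Ici 0) := by
    apply strictMonoOn_of_deriv_pos (convex_Ici 0)
    · fun_prop
    · intro y hy
      rw [interior_Ici] at hy
      have hd : HasDerivAt (fun y : ℝ => y + (y + 2) * Real.exp (-y))
          (1 + (1 * Real.exp (-y) + (y + 2) * (Real.exp (-y) * (-1)))) y := by
        exact (hasDerivAt_id y).add
          (((hasDerivAt_id y).add_const 2).mul (((hasDerivAt_id y).neg).exp))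
      rw [hd.deriv]
      have he : y + 1 < Real.exp y := Real.add_one_lt_exp (ne_of_gt hy)
      have h1 : Real.exp (-y) * Real.exp y = 1 := by
        rw [← Real.exp_add]; simp
      have hp : 0 < Real.exp (-y) := Real.exp_pos _
      nlinarith [mul_lt_mul_of_pos_left he hp]
  have := h (Set.self_mem_Ici) (Set.mem_Ici.mpr hx.le) hx
  simpa using this

noncomputable def Phi3 (ρ : ℝ) : ℝ :=
  if ρ = 0 then 1 else 2 * (1 - Phi1 ρ) / ρ

lemma key_pos (ρ : ℝ) (hρ : ρ ≠ 0) :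
    0 < (1 - Real.exp (-ρ)) * (ρ * (1 + Real.exp (-ρ)) - 2 * (1 - Real.exp (-ρ))) := by
  rcases lt_or_gt_of_ne hρ with h | h
  · have h1 : 1 < Real.exp (-ρ) := by
      rw [Real.one_lt_exp_iff]; linarith
    have hf := fpos (show (0:ℝ) < -ρ by linarith)
    have hm : Real.exp (-ρ) * Real.exp ρ = 1 := by rw [← Real.exp_add]; simp
    have hp : 0 < Real.exp ρ := Real.exp_pos _
    rw [show -(-ρ) = ρ by ring] at hf
    have h3 : 0 < Real.exp (-ρ) * (Real.exp (-ρ) - 1) * (-ρ + (-ρ + 2) * Real.exp ρ - 2) :=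
      mul_pos (mul_pos (Real.exp_pos _) (by linarith)) (by linarith)
    have h4 : (1 - Real.exp (-ρ)) * (ρ * (1 + Real.exp (-ρ)) - 2 * (1 - Real.exp (-ρ)))
        = Real.exp (-ρ) * (Real.exp (-ρ) - 1) * (-ρ + (-ρ + 2) * Real.exp ρ - 2) := by
      linear_combination (-(Real.exp (-ρ) - 1) * (-ρ + 2)) * hm
    rw [h4]; exact h3
  · have h1 : Real.exp (-ρ) < 1 := by
      rw [Real.exp_lt_one_iff]; linarith
    have hf := fpos h
    nlinarith

lemma phi_eq (ρ : ℝ) (hρ : ρ ≠ 0) :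
    phi ρ = 6 * ((1 - Real.exp (-ρ)) * (ρ * (1 + Real.exp (-ρ)) - 2 * (1 - Real.exp (-ρ)))) / ρ ^ 4 := by
  have h2 : (2 : ℝ) * ρ ≠ 0 := by simp [hρ]
  have he : Real.exp (-(2 * ρ)) = Real.exp (-ρ) ^ 2 := by
    rw [show -(2 * ρ) = -ρ + -ρ by ring, Real.exp_add]; ring
  have he' : Real.exp (-2 * ρ) = Real.exp (-ρ) ^ 2 := by
    rw [show (-2 : ℝ) * ρ = -ρ + -ρ by ring, Real.exp_add]; ring
  unfold phi Phi2 Phi1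
  rw [if_neg hρ, if_neg hρ, if_neg h2, he, he']
  field_simp
  ring

lemma phi_pos (ρ : ℝ) : 0 < phi ρ := by
  rcases eq_or_ne ρ 0 with rfl | hρ
  · norm_num [phi, Phi1, Phi2]
  · rw [phi_eq ρ hρ]
    have h4 : 0 < ρ ^ 4 := by positivity
    exact div_pos (by nlinarith [key_pos ρ hρ]) h4

theorem stmt_8 {d : ℕ} (t γ σ : ℝ) (ht : 0 < t) (hσ : 0 < σ)
    (δq δp : EuclideanSpace ℝ (Fin d)) :
    (1 / (σ ^ 4 * t ^ 4 / 12 * phi (γ * t))) *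
      ((σ ^ 2 * t * Phi1 (2 * (γ * t))) * ‖δq‖ ^ 2
        - 2 * (σ ^ 2 * t ^ 2 / 2 * (Phi1 (γ * t)) ^ 2) * (inner ℝ δq δp : ℝ)
        + (σ ^ 2 * t ^ 3 / 3 * Phi2 (γ * t)) * ‖δp‖ ^ 2)
    = (1 / (σ ^ 2 * t)) * ‖γ • δq + δp‖ ^ 2
      + (12 / (σ ^ 2 * t ^ 3 * phi (γ * t))) *
          ‖Phi1 (γ * t) • δq - ((t / 2) * Phi3 (γ * t)) • δp‖ ^ 2 := by
  have e1 : ‖γ • δq + δp‖ ^ 2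
      = γ ^ 2 * ‖δq‖ ^ 2 + 2 * γ * (inner ℝ δq δp : ℝ) + ‖δp‖ ^ 2 := by
    rw [norm_add_sq_real, real_inner_smul_left, norm_smul, Real.norm_eq_abs,
      mul_pow, sq_abs]
    ring
  have e2 : ∀ a b : ℝ, ‖a • δq - b • δp‖ ^ 2
      = a ^ 2 * ‖δq‖ ^ 2 - 2 * (a * b) * (inner ℝ δq δp : ℝ) + b ^ 2 * ‖δp‖ ^ 2 := by
    intro a b
    rw [norm_sub_sq_real, real_inner_smul_left, real_inner_smul_right, norm_smul,
      norm_smul, Real.norm_eq_abs, Real.norm_eq_abs, mul_pow, mul_pow, sq_abs, sq_abs]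
    ring
  rw [e1, e2]
  set Q := ‖δq‖ ^ 2
  set P := ‖δp‖ ^ 2
  set I := (inner ℝ δq δp : ℝ)
  have ht' : t ≠ 0 := ht.ne'
  have hσ' : σ ≠ 0 := hσ.ne'
  have hφ : phi (γ * t) ≠ 0 := (phi_pos _).ne'
  rcases eq_or_ne γ 0 with rfl | hγ
  · simp only [zero_mul, mul_zero, phi, Phi1, Phi2, Phi3, if_pos rfl]
    norm_num
    field_simp
    ring
  · have hρ : γ * t ≠ 0 := mul_ne_zero hγ ht'
    have h2ρ : 2 * (γ * t) ≠ 0 := by simp [hρ]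
    have he : Real.exp (-(2 * (γ * t))) = Real.exp (-(γ * t)) ^ 2 := by
      rw [show -(2 * (γ * t)) = -(γ * t) + -(γ * t) by ring, Real.exp_add]; ring
    have he' : Real.exp (-2 * (γ * t)) = Real.exp (-(γ * t)) ^ 2 := by
      rw [show (-2 : ℝ) * (γ * t) = -(γ * t) + -(γ * t) by ring, Real.exp_add]; ring
    rw [phi_eq _ hρ] at hφ ⊢
    simp only [Phi1, Phi2, Phi3, if_neg hρ, if_neg h2ρ, he, he']
    set u := Real.exp (-(γ * t)) with hu
    have hd : (1 - u) * (γ * t * (1 + u) - 2 * (1 - u)) ≠ 0 := by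
      intro h
      apply hφ
      rw [h]
      simp
    have hd1 : 1 - u ≠ 0 := (mul_ne_zero_iff.mp hd).1
    have hd2 : t * γ * (1 + u) - (1 - u) * 2 ≠ 0 := by
      intro h; apply (mul_ne_zero_iff.mp hd).2; linear_combination h
    field_simp
    ring
end
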